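/- Fundamental binary relation: for every ε ∈ Γ_N and every d ∈ ℤ, Si_d((ε);(q)) + ε^{−1}·(θ^q − θ)·Si_{d+1}((ε,1);(1,q−1)) = 0 in K_N. -/

import Mathlib

noncomputable section

open scoped Classical

namespace ZHPC

variable (Fq : Type) [Field Fq] [Fintype Fq]

/-- `q`, the cardinality of the base finite field `𝔽_q`. -/
def qc : ℕ := Fintype.card Fq

/-- A fixed algebraic closure `𝔽̄_q` of `𝔽_q`. -/
abbrev Fb := AlgebraicClosure Fq

/-- The field `𝔽̄_q((1/θ))` of formal Laurent series in `1/θ` over `𝔽̄_q`, modeled as the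
field of formal Laurent series in one variable, `θ` being the inverse of that variable. -/
abbrev Kinf := LaurentSeries (Fb Fq)

/-- The embedding of the constants `𝔽̄_q → 𝔽̄_q((1/θ))`. -/
def cst : Fb Fq →+* Kinf Fq := HahnSeries.C

/-- The element `θ`. -/
def theta : Kinf Fq := HahnSeries.single (-1 : ℤ) 1

/-- `ℓ_d = ∏_{i=1}^{d} (θ - θ^{q^i})`, with `ℓ_0 = 1`. -/
def ell (d : ℕ) : Kinf Fq := ∏ i ∈ Finset.Icc 1 d, (theta Fq - theta Fq ^ qc Fq ^ i)

/-- Arrays `(𝛆;𝔰)` of some depth `n`. -/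
structure PArr (F : Type) where
  depth : ℕ
  s : Fin depth → ℕ
  eps : Fin depth → F

namespace PArr

variable {F : Type}

/-- A *positive array* for level `N`: all entries `sᵢ` are positive integers and all the
characters `εᵢ` are `N`-th roots of unity. -/
def Positive [Monoid F] (N : ℕ) (A : PArr F) : Prop := (∀ i, 0 < A.s i) ∧ ∀ i, A.eps i ^ N = 1

/-- The weight `w(𝔰) = s₁ + ⋯ + s_n`. -/
def wt (A : PArr F) : ℕ := ∑ i, A.s i

/-- The `i`-th entry of `𝔰` (`0`-indexed), with value `0` beyond the depth. -/
def sAt (A : PArr F) (i : ℕ) : ℕ := if h : i < A.depth then A.s ⟨i, h⟩ else 0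

/-- The partial sums `s₁ + ⋯ + s_i` (entries beyond the depth being `0`). -/
def psum (A : PArr F) (i : ℕ) : ℕ := ∑ j ∈ Finset.range i, A.sAt j

/-- The character `χ(𝛆) = ε₁ ⋯ ε_n`. -/
def chi [CommMonoid F] (A : PArr F) : F := ∏ i, A.eps i

end PArr

/-- The Carlitz multiple polylogarithm at roots of unity
`Li(𝛆;𝔰) = Σ_{d₁ > ⋯ > d_n ≥ 0} ε₁^{d₁}⋯ε_n^{d_n} / (ℓ_{d₁}^{s₁}⋯ℓ_{d_n}^{s_n})`. -/
def Li (A : PArr (Fb Fq)) : Kinf Fq :=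
  ∑' d : {f : Fin A.depth → ℕ // StrictAnti f},
    ∏ i, cst Fq (A.eps i ^ d.1 i) / ell Fq (d.1 i) ^ A.s i

/-- `Si_d(𝛆;𝔰)`: same summand as `Li`, over decreasing tuples with `d₁ = d`. -/
def Sid (d : ℤ) (A : PArr (Fb Fq)) : Kinf Fq :=
  ∑' f : {f : Fin A.depth → ℕ // StrictAnti f ∧ ∀ i : Fin A.depth, i.val = 0 → (f i : ℤ) = d},
    ∏ i, cst Fq (A.eps i ^ f.1 i) / ell Fq (f.1 i) ^ A.s i

/-- `Si_{<d}(𝛆;𝔰)`: same summand as `Li`, over decreasing tuples with `d > d₁`. -/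
def SidLt (d : ℤ) (A : PArr (Fb Fq)) : Kinf Fq :=
  ∑' f : {f : Fin A.depth → ℕ // StrictAnti f ∧ ∀ i : Fin A.depth, (f i : ℤ) < d},
    ∏ i, cst Fq (A.eps i ^ f.1 i) / ell Fq (f.1 i) ^ A.s i

/-- The value at `θ` of the monic polynomial `θ^e + Σ_{j<e} c_j θ^j ∈ A = 𝔽_q[θ]`. -/
def monicVal (e : ℕ) (c : Fin e → Fq) : Kinf Fq :=
  theta Fq ^ e + ∑ j, cst Fq (algebraMap Fq (Fb Fq) (c j)) * theta Fq ^ (j : ℕ)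

/-- The power sum `S_d(𝛆;𝔰)`, a sum over tuples of monic polynomials `a₁, …, a_n ∈ A₊`
with `d = deg a₁ > ⋯ > deg a_n ≥ 0`; a monic polynomial of degree `e` is encoded by its
tuple of lower coefficients `c : Fin e → Fq`. -/
def Sd (d : ℤ) (A : PArr (Fb Fq)) : Kinf Fq :=
  ∑' e : {f : Fin A.depth → ℕ // StrictAnti f ∧ ∀ i : Fin A.depth, i.val = 0 → (f i : ℤ) = d},
    ∑ c : (∀ i, Fin (e.1 i) → Fq),
      ∏ i, cst Fq (A.eps i ^ e.1 i) / monicVal Fq (e.1 i) (c i) ^ A.s i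

/-- The `N`-th cyclotomic multiple zeta value `ζ_A(𝛆;𝔰) = Σ_{d ≥ 0} S_d(𝛆;𝔰)`. -/
def zetaA (A : PArr (Fb Fq)) : Kinf Fq := ∑' d : ℕ, Sd Fq (d : ℤ) A

/-- The cyclotomic field `k_N = 𝔽_q(ζ_N) ⊆ 𝔽̄_q`. -/
def kN (N : ℕ) : Subfield (Fb Fq) :=
  Subfield.closure (Set.range (algebraMap Fq (Fb Fq)) ∪ {x | x ^ N = 1})

/-- The field `K_N = k_N(θ)`, as a subfield of `𝔽̄_q((1/θ))`. -/
def KNf (N : ℕ) : Subfield (Kinf Fq) :=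
  Subfield.closure ((cst Fq '' (kN Fq N : Set (Fb Fq))) ∪ {theta Fq})

/-- The ring `A_N = k_N[θ]`, as a subring of `𝔽̄_q((1/θ))`. -/
def AN (N : ℕ) : Subring (Kinf Fq) :=
  Subring.closure ((cst Fq '' (kN Fq N : Set (Fb Fq))) ∪ {theta Fq})

/-- `CZ_{N,w}`: the `K_N`-span of the `N`-th cyclotomic multiple zeta values of weight `w`. -/
def CZ (N w : ℕ) : Submodule (KNf Fq N) (Kinf Fq) :=
  Submodule.span (KNf Fq N) {x | ∃ A : PArr (Fb Fq), A.Positive N ∧ A.wt = w ∧ x = zetaA Fq A}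

/-- `CL_{N,w}`: the `K_N`-span of the CMPL's at `N`-th roots of unity of weight `w`. -/
def CL (N w : ℕ) : Submodule (KNf Fq N) (Kinf Fq) :=
  Submodule.span (KNf Fq N) {x | ∃ A : PArr (Fb Fq), A.Positive N ∧ A.wt = w ∧ x = Li Fq A}

/-- The index set of pairs `(𝔰,𝛆)` with `𝔰 ∈ S_w` and `𝛆 ∈ Γ_N^{depth 𝔰}`: positive arrays
of weight `w` with `q ∤ sᵢ` for all `i`. -/
def SwIdx (N w : ℕ) : Type :=
  {A : PArr (Fb Fq) // A.Positive N ∧ 0 < A.depth ∧ A.wt = w ∧ ∀ i, ¬ qc Fq ∣ A.s i}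


lemma hQ2 : 2 ≤ qc Fq := Fintype.one_lt_card

lemma theta_pow_ne {k j : ℕ} (h : k ≠ j) : theta Fq ^ k ≠ theta Fq ^ j := by
  rw [theta, HahnSeries.single_pow, HahnSeries.single_pow]
  intro heq
  have hc := congrArg (fun x => HahnSeries.coeff x (k • (-1 : ℤ))) heq
  simp only [HahnSeries.coeff_single_same] at hc
  rw [HahnSeries.coeff_single_of_ne (by simp [nsmul_eq_mul]; omega)] at hc
  simp at hc

lemma ell_ne_zero (d : ℕ) : ell Fq d ≠ 0 := by
  rw [ell]
  apply Finset.prod_ne_zero_iff.mpr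
  intro i hi
  rw [Finset.mem_Icc] at hi
  apply sub_ne_zero.mpr
  conv_lhs => rw [← pow_one (theta Fq)]
  exact theta_pow_ne Fq (by
    have : 1 < qc Fq ^ i := Nat.one_lt_pow (by omega) (hQ2 Fq)
    omega)

lemma frob (x y : Kinf Fq) : (x - y) ^ qc Fq = x ^ qc Fq - y ^ qc Fq := by
  haveI : CharP Fq (ringChar Fq) := ringChar.charP Fq
  obtain ⟨n, hp, hcard⟩ := FiniteField.card Fq (ringChar Fq)
  haveI : Fact (Nat.Prime (ringChar Fq)) := ⟨hp⟩
  haveI h1 : CharP (Fb Fq) (ringChar Fq) :=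
    charP_of_injective_ringHom (algebraMap Fq (Fb Fq)).injective _
  haveI h2 : CharP (Kinf Fq) (ringChar Fq) :=
    charP_of_injective_ringHom (HahnSeries.C_injective (Γ := ℤ) (R := Fb Fq)) _
  rw [qc, hcard]
  exact sub_pow_char_pow x y n

lemma key (m : ℕ) :
    (theta Fq ^ qc Fq - theta Fq) * (∑ j ∈ Finset.range (m+1), (ell Fq j ^ (qc Fq - 1))⁻¹)
        * ell Fq m ^ (qc Fq - 1)
      = theta Fq ^ qc Fq ^ (m+1) - theta Fq := by
  induction m with
  | zero =>
    have h0 : ell Fq 0 = 1 := by rw [ell]; simp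
    simp [h0, pow_one]
  | succ m ih =>
    have hQ1 : 1 ≤ qc Fq := by have := hQ2 Fq; omega
    have hsucc : ell Fq (m+1) = ell Fq m * (theta Fq - theta Fq ^ qc Fq ^ (m+1)) := by
      rw [ell, ell, Finset.prod_Icc_succ_top (by omega)]
    have hEne : ell Fq (m+1) ≠ 0 := ell_ne_zero Fq (m+1)
    have hinv : (ell Fq (m+1) ^ (qc Fq - 1))⁻¹ * ell Fq (m+1) ^ (qc Fq - 1) = 1 :=
      inv_mul_cancel₀ (pow_ne_zero _ hEne)
    set t := theta Fq with ht
    set Q := qc Fq with hQ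
    set D := t - t ^ Q ^ (m+1) with hD
    have hpow : (t ^ Q ^ (m+1)) ^ Q = t ^ Q ^ (m+1+1) := by
      rw [← pow_mul, ← pow_succ]
    have hDQ : D ^ Q = t ^ Q - t ^ Q ^ (m+1+1) := by rw [hD, frob, hpow]
    have hDQ' : D ^ (Q-1) * D = D ^ Q := by rw [← pow_succ, Nat.sub_add_cancel hQ1]
    rw [Finset.sum_range_succ]
    calc (t^Q - t) * ((∑ j ∈ Finset.range (m+1), (ell Fq j ^ (Q-1))⁻¹)
            + (ell Fq (m+1) ^ (Q-1))⁻¹) * ell Fq (m+1) ^ (Q-1)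
        = ((t^Q - t) * (∑ j ∈ Finset.range (m+1), (ell Fq j ^ (Q-1))⁻¹) * ell Fq m ^ (Q-1))
            * D^(Q-1)
          + (t^Q - t) * ((ell Fq (m+1) ^ (Q-1))⁻¹ * ell Fq (m+1) ^ (Q-1)) := by
          rw [hsucc, mul_pow]; ring
      _ = (t ^ Q ^ (m+1) - t) * D^(Q-1) + (t^Q - t) := by rw [ih, hinv, mul_one]
      _ = -(D^(Q-1) * D) + (t^Q - t) := by rw [hD]; ring
      _ = t ^ Q ^ (m+1+1) - t := by rw [hDQ', hDQ]; ring

lemma Sid_one_empty (d : ℤ) (hd : d < 0) (sv : ℕ) (ε : Fb Fq) :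
    Sid Fq d ⟨1, fun _ => sv, fun _ => ε⟩ = 0 := by
  rw [Sid]
  haveI : IsEmpty {f : Fin 1 → ℕ // StrictAnti f ∧ ∀ i : Fin 1, i.val = 0 → (f i : ℤ) = d} := by
    constructor; rintro ⟨f, hf⟩
    have h1 := hf.2 0 rfl
    have h2 : (0:ℤ) ≤ (f 0 : ℤ) := Int.natCast_nonneg _
    omega
  exact tsum_empty

lemma Sid_two_empty (d : ℤ) (hd : d ≤ 0) (s : Fin 2 → ℕ) (e : Fin 2 → Fb Fq) :
    Sid Fq d ⟨2, s, e⟩ = 0 := by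
  rw [Sid]
  haveI : IsEmpty {f : Fin 2 → ℕ // StrictAnti f ∧ ∀ i : Fin 2, i.val = 0 → (f i : ℤ) = d} := by
    constructor; rintro ⟨f, hf⟩
    have h0 := hf.2 0 rfl
    have h1 : f 1 < f 0 := hf.1 (by decide)
    have h2 : (f 1 : ℤ) < (f 0 : ℤ) := by exact_mod_cast h1
    have h3 : (0:ℤ) ≤ (f 1 : ℤ) := Int.natCast_nonneg _
    omega
  exact tsum_empty

lemma Sid_one_eval (ε : Fb Fq) (m : ℕ) :
    Sid Fq (m : ℤ) ⟨1, fun _ => qc Fq, fun _ => ε⟩ = cst Fq (ε ^ m) / ell Fq m ^ qc Fq := by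
  rw [Sid]
  have hmem : StrictAnti (fun _ : Fin 1 => m) ∧
      ∀ i : Fin 1, i.val = 0 → (((fun _ : Fin 1 => m) i : ℕ) : ℤ) = (m:ℤ) := by
    constructor
    · intro i j hij
      rw [Subsingleton.elim i j] at hij
      exact absurd hij (lt_irrefl _)
    · intro i _; rfl
  haveI : Subsingleton {f : Fin 1 → ℕ // StrictAnti f ∧
      ∀ i : Fin 1, i.val = 0 → (f i : ℤ) = (m:ℤ)} := by
    constructor
    rintro ⟨f, hf⟩ ⟨g, hg⟩
    apply Subtype.ext
    funext i
    show f i = g i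
    have h1 : ((f i : ℕ) : ℤ) = (m:ℤ) := hf.2 i (by omega)
    have h2 : ((g i : ℕ) : ℤ) = (m:ℤ) := hg.2 i (by omega)
    omega
  rw [tsum_eq_single (⟨fun _ => m, hmem⟩ :
      {f : Fin 1 → ℕ // StrictAnti f ∧ ∀ i : Fin 1, i.val = 0 → (f i : ℤ) = (m:ℤ)})
    (fun b hb => absurd (Subsingleton.elim b _) hb)]
  rw [Fin.prod_univ_one]

lemma Sid_two_eval (ε : Fb Fq) (m : ℕ) :
    Sid Fq ((m : ℤ) + 1) ⟨2, ![1, qc Fq - 1], ![ε, 1]⟩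
      = cst Fq (ε ^ (m+1)) / ell Fq (m+1)
          * ∑ j ∈ Finset.range (m+1), (ell Fq j ^ (qc Fq - 1))⁻¹ := by
  rw [Sid]
  have hanti : ∀ j : Fin (m+1), StrictAnti (![m+1, (j:ℕ)] : Fin 2 → ℕ) := by
    intro j a b hab
    fin_cases a <;> fin_cases b <;> simp_all <;> exact Fin.is_le j
  have hcond : ∀ j : Fin (m+1), ∀ i : Fin 2, i.val = 0 →
      (((![m+1, (j:ℕ)] : Fin 2 → ℕ) i : ℕ) : ℤ) = (m:ℤ)+1 := by
    intro j i hi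
    have hi0 : i = 0 := Fin.ext hi
    subst hi0
    simp
  have hbij : Function.Bijective (fun j : Fin (m+1) =>
      (⟨![m+1, (j:ℕ)], hanti j, hcond j⟩ :
        {f : Fin 2 → ℕ // StrictAnti f ∧ ∀ i : Fin 2, i.val = 0 → (f i : ℤ) = (m:ℤ)+1})) := by
    constructor
    · intro a b hab
      have h := congrArg (fun x => x.1 1) hab
      simp only [Matrix.cons_val_one, Matrix.head_cons] at h
      exact Fin.ext h
    · rintro ⟨f, hf⟩
      have h00 := hf.2 0 rfl
      have h0 : f 0 = m+1 := by omega
      have h1 : f 1 < m+1 := by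
        have := hf.1 (show (0:Fin 2) < 1 by decide)
        omega
      refine ⟨⟨f 1, h1⟩, ?_⟩
      apply Subtype.ext
      funext i
      fin_cases i
      · simpa using h0.symm
      · rfl
  rw [← Equiv.tsum_eq (Equiv.ofBijective _ hbij), tsum_fintype]
  trans ∑ j : Fin (m+1), cst Fq (ε ^ (m+1)) / ell Fq (m+1) * (ell Fq (j:ℕ) ^ (qc Fq - 1))⁻¹
  · refine Finset.sum_congr rfl fun j _ => ?_
    show (∏ i : Fin 2, cst Fq ((![ε, 1] : Fin 2 → Fb Fq) i ^ (![m+1, (j:ℕ)] : Fin 2 → ℕ) i)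
        / ell Fq ((![m+1, (j:ℕ)] : Fin 2 → ℕ) i) ^ (![1, qc Fq - 1] : Fin 2 → ℕ) i) = _
    rw [Fin.prod_univ_two]
    simp [one_div]
  · rw [← Finset.mul_sum]
    congr 1
    exact Fin.sum_univ_eq_sum_range (fun k => (ell Fq k ^ (qc Fq - 1))⁻¹) (m+1)

/-- **The fundamental binary relation** `R_ε`: for every `ε ∈ Γ_N` and every `d ∈ ℤ`,
`Si_d((ε);(q)) + ε⁻¹·(θ^q - θ)·Si_{d+1}((ε,1);(1,q-1)) = 0`. -/
theorem fundamental_binary_relation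
    (Fq : Type) [Field Fq] [Fintype Fq] (N : ℕ) (hN : 0 < N)
    (ε : Fb Fq) (hε : ε ^ N = 1) (d : ℤ) :
    Sid Fq d ⟨1, fun _ => qc Fq, fun _ => ε⟩
      + cst Fq ε⁻¹ * (theta Fq ^ qc Fq - theta Fq)
          * Sid Fq (d + 1) ⟨2, ![1, qc Fq - 1], ![ε, 1]⟩ = 0 := by
  have hε0 : ε ≠ 0 := by
    intro h
    rw [h, zero_pow hN.ne'] at hε
    exact zero_ne_one hε
  rcases lt_or_ge d 0 with hd | hd
  · rw [Sid_one_empty Fq d hd, Sid_two_empty Fq (d+1) (by omega)]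
    ring
  · obtain ⟨m, rfl⟩ : ∃ m : ℕ, d = (m : ℤ) := ⟨d.toNat, (Int.toNat_of_nonneg hd).symm⟩
    rw [Sid_one_eval, Sid_two_eval]
    have hQ1 : 1 ≤ qc Fq := by have := hQ2 Fq; omega
    have hm : ell Fq m ≠ 0 := ell_ne_zero Fq m
    have hm1 : ell Fq (m+1) ≠ 0 := ell_ne_zero Fq (m+1)
    have hkey := key Fq m
    have hsucc : ell Fq (m+1) = ell Fq m * (theta Fq - theta Fq ^ qc Fq ^ (m+1)) := by
      rw [ell, ell, Finset.prod_Icc_succ_top (by omega)]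
    set S := ∑ j ∈ Finset.range (m+1), (ell Fq j ^ (qc Fq - 1))⁻¹ with hS
    have hbr : (ell Fq m ^ qc Fq)⁻¹
        + (theta Fq ^ qc Fq - theta Fq) * (ell Fq (m+1))⁻¹ * S = 0 := by
      have hD : theta Fq - theta Fq ^ qc Fq ^ (m+1) ≠ 0 :=
        fun h => hm1 (by rw [hsucc, h, mul_zero])
      have hLQ : ell Fq m ^ qc Fq = ell Fq m ^ (qc Fq - 1) * ell Fq m := by
        rw [← pow_succ, Nat.sub_add_cancel hQ1]
      rw [hLQ, hsucc]
      field_simp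
      linear_combination hkey
    simp only [map_pow, map_inv₀]
    have hx : cst Fq ε ≠ 0 := (map_ne_zero (cst Fq)).mpr hε0
    have hxi : (cst Fq ε)⁻¹ * cst Fq ε = 1 := inv_mul_cancel₀ hx
    linear_combination (cst Fq ε ^ m) * hbr
      + (cst Fq ε ^ m * (theta Fq ^ qc Fq - theta Fq) * (ell Fq (m+1))⁻¹ * S) * hxi

end ZHPC
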